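/- Let V be a finite set with N elements and P a probability distribution on V. For δ ∈ (0,1), if k ≥ log(δ/N) / log(1 − δ/N), then Σ_{v ∈ V} (1 − P(v))^k P(v) ≤ δ. -/

import Mathlib

theorem sum_bound_of_many_samples
    (V : Type*) [Fintype V] (hN : 1 ≤ Fintype.card V)
    (P : V → ℝ) (hP0 : ∀ v, 0 ≤ P v) (hP1 : ∑ v, P v = 1)
    (δ : ℝ) (hδ0 : 0 < δ) (hδ1 : δ < 1)
    (k : ℕ)
    (hk : (k : ℝ) ≥ Real.log (δ / Fintype.card V) /
      Real.log (1 - δ / Fintype.card V)) :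
    ∑ v, (1 - P v) ^ k * P v ≤ δ := by
  set N : ℕ := Fintype.card V with hNdef
  have hNpos : (0 : ℝ) < N := by exact_mod_cast Nat.lt_of_lt_of_le Nat.zero_lt_one hN
  have hN1 : (1 : ℝ) ≤ N := by exact_mod_cast hN
  set t : ℝ := δ / N with htdef
  have ht0 : 0 < t := div_pos hδ0 hNpos
  have htδ : t ≤ δ := by
    rw [htdef, div_le_iff₀ hNpos]
    nlinarith
  have ht1 : t < 1 := lt_of_le_of_lt htδ hδ1
  have hkey : (1 - t) ^ k ≤ t := by
    have h1t0 : 0 < 1 - t := by linarith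
    have hlogneg : Real.log (1 - t) < 0 := Real.log_neg (by linarith) (by linarith)
    have hmul : (k : ℝ) * Real.log (1 - t) ≤ Real.log t := by
      have := (div_le_iff_of_neg hlogneg).mp hk
      linarith
    calc (1 - t) ^ k = Real.exp ((k : ℝ) * Real.log (1 - t)) := by
          rw [← Real.log_pow, Real.exp_log (pow_pos h1t0 k)]
      _ ≤ Real.exp (Real.log t) := Real.exp_le_exp.mpr hmul
      _ = t := Real.exp_log ht0
  have hP1' : ∀ v, P v ≤ 1 := by
    intro v
    calc P v ≤ ∑ w, P w := Finset.single_le_sum (fun w _ => hP0 w) (Finset.mem_univ v)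
      _ = 1 := hP1
  have hterm : ∀ v, (1 - P v) ^ k * P v ≤ t := by
    intro v
    rcases le_or_gt (P v) t with h | h
    · calc (1 - P v) ^ k * P v ≤ 1 * P v := by
            apply mul_le_mul_of_nonneg_right _ (hP0 v)
            exact pow_le_one₀ (by linarith [hP1' v]) (by linarith [hP0 v])
        _ = P v := one_mul _
        _ ≤ t := h
    · have h1 : (1 - P v) ^ k ≤ (1 - t) ^ k :=
        pow_le_pow_left₀ (by linarith [hP1' v]) (by linarith) k
      calc (1 - P v) ^ k * P v ≤ t * P v := by
            apply mul_le_mul_of_nonneg_right _ (hP0 v)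
            exact h1.trans hkey
        _ ≤ t * 1 := by
            apply mul_le_mul_of_nonneg_left (hP1' v) ht0.le
        _ = t := mul_one _
  calc ∑ v, (1 - P v) ^ k * P v ≤ ∑ _v : V, t := Finset.sum_le_sum (fun v _ => hterm v)
    _ = N * t := by rw [Finset.sum_const, Finset.card_univ]; simp [nsmul_eq_mul]; exact Or.inl hNdef.symm
    _ = δ := by rw [htdef]; field_simp [hNpos.ne']
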